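/- arXiv:2512.06832 — 9 statements merged into one kernel-verified Lean document; each statement's English description precedes it below -/
import Mathlib

section
/- In a linear and complete residuated lattice L, for any ε, x, y, z ∈ L: x ≤_ε (y →_ε z) if and only if x ⊗_ε y ≤_ε z, where x ≤_ε y means (x ≤ y or x ≤ ε), x ⊗_ε y is defined as x ⊗ y if x ⊗ y > ε and ε otherwise, and (y →_ε z) is defined as (y ∨ ε) → (z ∨ ε). -/
/-- A linear and complete residuated lattice: a complete linear order carrying a
commutative monoid structure whose unit `1` is the greatest element, together with a
residuum satisfying the adjunction property. -/
class ResiduatedLattice (L : Type*) extends CompleteLinearOrder L, CommMonoid L where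
  res : L → L → L
  adjunction : ∀ x y z : L, x * y ≤ z ↔ x ≤ res y z
  one_eq_top : (1 : L) = ⊤

variable {L : Type*} [ResiduatedLattice L]

/-- `x ≤_ε y` iff `x ≤ y` or `x ≤ ε`. -/
def leE (ε x y : L) : Prop := x ≤ y ∨ x ≤ ε

/-- `x ⊗_ε y` is `x ⊗ y` if `x ⊗ y > ε`, and `ε` otherwise. -/
def mulE (ε x y : L) : L := if ε < x * y then x * y else ε

/-- `x →_ε y := (x ∨ ε) → (y ∨ ε)`. -/
def resE (ε x y : L) : L := ResiduatedLattice.res (x ⊔ ε) (y ⊔ ε)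

theorem stmt_0 (ε x y z : L) :
    leE ε x (resE ε y z) ↔ leE ε (mulE ε x y) z := by
  have adj := ResiduatedLattice.adjunction (L := L)
  have hmono : ∀ a b c : L, a ≤ b → c * a ≤ c * b := by
    intro a b c h
    have hb : b ≤ ResiduatedLattice.res c (c * b) :=
      (adj b c (c * b)).mp (le_of_eq (mul_comm b c))
    have h2 : a ≤ ResiduatedLattice.res c (c * b) := le_trans h hb
    have h3 := (adj a c (c * b)).mpr h2
    rw [mul_comm] at h3
    exact h3
  have hle_one : ∀ a : L, a ≤ 1 := fun a => ResiduatedLattice.one_eq_top (L := L) ▸ le_top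
  have hmul_le_left : ∀ a b : L, a * b ≤ a := fun a b => by
    have := hmono b 1 a (hle_one b); simpa using this
  have hmul_le_right : ∀ a b : L, a * b ≤ b := fun a b => by
    rw [mul_comm]; exact hmul_le_left b a
  constructor
  · rintro (h | h)
    · unfold resE at h
      have h2 : x * (y ⊔ ε) ≤ z ⊔ ε := (adj _ _ _).mpr h
      by_cases hc : ε < x * y
      · left
        unfold mulE; rw [if_pos hc]
        have hxy : x * y ≤ z ⊔ ε := le_trans (hmono y (y ⊔ ε) x le_sup_left) h2
        rcases le_total z ε with hz | hz
        · exact absurd (by simpa [sup_eq_right.mpr hz] using hxy) (not_le.mpr hc)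
        · calc x * y ≤ z ⊔ ε := hxy
            _ = z := sup_eq_left.mpr hz
      · right; unfold mulE; rw [if_neg hc]
    · right
      have hxy : x * y ≤ ε := le_trans (hmul_le_left x y) h
      unfold mulE; rw [if_neg (not_lt.mpr hxy)]
  · rintro h
    rcases le_total x ε with hx | hx
    · exact Or.inr hx
    · left
      unfold resE; rw [← adj x (y ⊔ ε) (z ⊔ ε)]
      rcases le_total y ε with hy | hy
      · rw [sup_eq_right.mpr hy]
        exact le_trans (hmul_le_right x ε) le_sup_right
      · rw [sup_eq_left.mpr hy]
        by_cases hc : ε < x * y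
        · unfold mulE at h; rw [if_pos hc] at h
          rcases h with h | h
          · exact le_trans h le_sup_left
          · exact le_trans h le_sup_right
        · exact le_trans (not_lt.mp hc) le_sup_right
end

section
/- For the product structure on [0,1] (with x ⊗ y = xy), the ε-approximate monoid is ⊗-locally finite for every ε ∈ (0,1): the submonoid of ([0,1], ⊗_ε, 1) generated by any finite set is finite, where x ⊗_ε y := xy if xy > ε and ε otherwise. -/
open unitInterval

/-- The `ε`-approximate product t-norm on `[0,1]`: `x ⊗_ε y = x·y` if `x·y > ε`, else `ε`. -/
noncomputable def prodMulE (ε x y : unitInterval) : unitInterval :=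
  if ε < x * y then x * y else ε

/-- The submonoid of `([0,1], ⊗_ε, 1)` generated by a set `S`: the closure of `S ∪ {1}`
under `⊗_ε`. -/
inductive genE (ε : unitInterval) (S : Set unitInterval) : unitInterval → Prop
  | one : genE ε S 1
  | mem {x} : x ∈ S → genE ε S x
  | mul {x y} : genE ε S x → genE ε S y → genE ε S (prodMulE ε x y)

private lemma my_prod_le_pow_card (c : ℝ) (hc0 : 0 ≤ c)
    (m : Multiset unitInterval) (h : ∀ a ∈ m, (a : ℝ) ≤ c) :
    ((m.prod : unitInterval) : ℝ) ≤ c ^ Multiset.card m := by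
  induction m using Multiset.induction with
  | empty => simp
  | cons a m ih =>
      simp only [Multiset.prod_cons, Multiset.card_cons]
      have ha : (a : ℝ) ≤ c := h a (Multiset.mem_cons_self a m)
      have hm : ((m.prod : unitInterval) : ℝ) ≤ c ^ Multiset.card m :=
        ih fun b hb => h b (Multiset.mem_cons_of_mem hb)
      calc ((a * m.prod : unitInterval) : ℝ) = (a : ℝ) * ((m.prod : unitInterval) : ℝ) := rfl
        _ ≤ c * c ^ Multiset.card m := mul_le_mul ha hm (m.prod).2.1 hc0
        _ = c ^ (Multiset.card m + 1) := (pow_succ' c _).symm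

private lemma genE_struct {ε : unitInterval} {S : Set unitInterval} {x : unitInterval}
    (hx : genE ε S x) :
    x = ε ∨ ∃ m : Multiset unitInterval, (∀ a ∈ m, a ∈ S ∧ a ≠ 1) ∧ x = m.prod ∧
      (Multiset.card m ≤ 1 ∨ ε < x) := by
  induction hx with
  | one => exact Or.inr ⟨0, by simp, by simp, Or.inl (by simp)⟩
  | mem hxS =>
      rename_i x
      by_cases hx1 : x = 1
      · exact Or.inr ⟨0, by simp, by simp [hx1], Or.inl (by simp)⟩
      · exact Or.inr ⟨{x}, by simp [hxS, hx1], by simp, Or.inl (by simp)⟩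
  | mul hx hy ihx ihy =>
      rename_i x y
      by_cases hlt : ε < x * y
      · have hres : prodMulE ε x y = x * y := if_pos hlt
        have key : ∀ z w : unitInterval, ε < z * w → z ≠ ε := by
          intro z w hzw hzε
          have hle : ((z * w : unitInterval) : ℝ) ≤ (ε : ℝ) := by
            have hcoe : ((z * w : unitInterval) : ℝ) = (z : ℝ) * (w : ℝ) := rfl
            rw [hcoe, hzε]
            calc (ε : ℝ) * (w : ℝ) ≤ (ε : ℝ) * 1 := mul_le_mul_of_nonneg_left w.2.2 ε.2.1
              _ = (ε : ℝ) := mul_one _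
          exact absurd (Subtype.coe_lt_coe.mpr hzw) (not_lt.mpr hle)
        have hxε : x ≠ ε := key x y hlt
        have hyε : y ≠ ε := key y x (by rwa [mul_comm])
        obtain ⟨mx, hmx, hxprod, -⟩ := ihx.resolve_left hxε
        obtain ⟨my, hmy, hyprod, -⟩ := ihy.resolve_left hyε
        refine Or.inr ⟨mx + my, ?_, ?_, Or.inr (hres ▸ hlt)⟩
        · intro a ha
          rcases Multiset.mem_add.mp ha with h | h
          exacts [hmx a h, hmy a h]
        · rw [hres, Multiset.prod_add, hxprod, hyprod]
      · left; exact if_neg hlt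

/-- For the product structure on `[0,1]`, the `ε`-approximate monoid is `⊗`-locally finite
for every `ε ∈ (0,1)`: the submonoid of `([0,1], ⊗_ε, 1)` generated by any finite set is
finite. -/
theorem stmt_3 (ε : unitInterval) (h0 : 0 < ε) (h1 : ε < 1)
    (S : Set unitInterval) (hS : S.Finite) :
    {x | genE ε S x}.Finite := by
  -- choose c : bound on non-one elements of S
  obtain ⟨c, hc0, hc1, hc⟩ : ∃ c : ℝ, 0 ≤ c ∧ c < 1 ∧ ∀ a ∈ S, a ≠ 1 → (a : ℝ) ≤ c := by
    classical
    set T : Set ℝ := (fun a : unitInterval => (a : ℝ)) '' {a ∈ S | a ≠ 1} with hT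
    have hTfin : T.Finite := (hS.subset (Set.sep_subset _ _)).image _
    rcases T.eq_empty_or_nonempty with hTe | hTne
    · refine ⟨0, le_refl _, one_pos, fun a haS ha1 => ?_⟩
      exact absurd (Set.mem_image_of_mem _ (Set.mem_sep haS ha1)) (hTe ▸ Set.notMem_empty _)
    · obtain ⟨c, hcT, hcmax⟩ := hTfin.exists_maximalFor id T hTne
      obtain ⟨a, ⟨haS, ha1⟩, rfl⟩ := hcT
      refine ⟨(a : ℝ), a.2.1, lt_of_le_of_ne a.2.2 (fun h => ha1 (Subtype.ext h)), ?_⟩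
      intro b hbS hb1
      by_contra hlt
      push_neg at hlt
      exact absurd (hcmax (Set.mem_image_of_mem _ ⟨hbS, hb1⟩) hlt.le) (not_le.mpr hlt)
  -- choose N with c ^ N < ε
  obtain ⟨N, hN⟩ : ∃ N : ℕ, c ^ N < (ε : ℝ) :=
    exists_pow_lt_of_lt_one (Subtype.coe_lt_coe.mpr h0) hc1
  set K := max N 1 with hK
  -- the covering set
  have hcover : {x | genE ε S x} ⊆
      insert ε ((fun f : Fin K → unitInterval => ∏ i, f i) ''
        (Set.univ.pi fun _ => insert 1 S)) := by
    intro x hx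
    rcases genE_struct hx with rfl | ⟨m, hm, rfl, hcard⟩
    · exact Set.mem_insert _ _
    · right
      -- card bound
      have hcardK : Multiset.card m ≤ K := by
        rcases hcard with h | h
        · exact h.trans (le_max_right _ _)
        · have hle : ((m.prod : unitInterval) : ℝ) ≤ c ^ Multiset.card m :=
            my_prod_le_pow_card c hc0 m (fun a ha => hc a (hm a ha).1 (hm a ha).2)
          have hεlt : (ε : ℝ) < c ^ Multiset.card m :=
            lt_of_lt_of_le (Subtype.coe_lt_coe.mpr h) hle
          by_contra hgt
          push_neg at hgt
          have : c ^ Multiset.card m ≤ c ^ N :=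
            pow_le_pow_of_le_one hc0 hc1.le ((le_max_left N 1).trans hgt.le)
          exact absurd (hεlt.trans_le this) (not_lt.mpr hN.le)
      -- build the function
      classical
      set l : List unitInterval := m.toList ++ List.replicate (K - Multiset.card m) 1 with hl
      have hlen : l.length = K := by
        simp [hl, Nat.add_sub_cancel' (by simpa using hcardK)]
      refine ⟨fun i : Fin K => l.get (Fin.cast hlen.symm i), fun i _ => ?_, ?_⟩
      · show l.get (Fin.cast hlen.symm i) ∈ insert 1 S
        have hmem : l.get (Fin.cast hlen.symm i) ∈ l := l.get_mem _
        rcases List.mem_append.mp hmem with h | h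
        · exact Set.mem_insert_of_mem _ (hm _ (by simpa using h)).1
        · rw [List.eq_of_mem_replicate h]
          exact Set.mem_insert _ _
      · calc (∏ i : Fin K, l.get (Fin.cast hlen.symm i))
            = ∏ j : Fin l.length, l.get j :=
              Fintype.prod_equiv (finCongr hlen.symm) _ _ (fun i => rfl)
          _ = (List.ofFn l.get).prod := List.prod_ofFn.symm
          _ = l.prod := by rw [List.ofFn_get]
          _ = m.prod := by simp [hl, Multiset.prod_toList]
  refine Set.Finite.subset (Set.Finite.insert _ ?_) hcover
  exact (Set.Finite.pi fun _ => hS.insert 1).image _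
end

section
/- Let r and s be fuzzy relations on a set X over a linear complete residuated lattice and ε ∈ L. Then r ∘ s =_ε r ∘_ε s, where (r ∘ s)(a,b) = sup_c r(a,c) ⊗ s(c,b) and (r ∘_ε s)(a,b) = ⋁_ε { r(a,c) ⊗_ε s(c,b) : c ∈ X }. -/
variable {L : Type*} [ResiduatedLattice L]

/-- `x =_ε y` iff `x ≤_ε y` and `y ≤_ε x`. -/
def eqE (ε x y : L) : Prop := leE ε x y ∧ leE ε y x

/-- Composition of fuzzy relations: `(r ∘ s)(a,b) = sup_c r(a,c) ⊗ s(c,b)`. -/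
noncomputable def relComp {X : Type*} (r s : X → X → L) : X → X → L :=
  fun a b => ⨆ c, r a c * s c b

/-- `ε`-composition of fuzzy relations:
`(r ∘_ε s)(a,b) = ⋁_ε { r(a,c) ⊗_ε s(c,b) : c ∈ X }`. -/
noncomputable def relCompE {X : Type*} (ε : L) (r s : X → X → L) : X → X → L :=
  fun a b => (⨆ c, mulE ε (r a c) (s c b)) ⊔ ε

theorem stmt_7 {X : Type*} (ε : L) (r s : X → X → L) :
    ∀ a b : X, eqE ε (relComp r s a b) (relCompE ε r s a b) := by
  intro a b
  have hmul : ∀ x y : L, mulE ε x y = (x * y) ⊔ ε := by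
    intro x y
    unfold mulE
    rcases lt_or_ge ε (x * y) with h | h
    · simp [h, le_of_lt h]
    · simp [not_lt.mpr h, h]
  have hE : relCompE ε r s a b = (⨆ c, (r a c * s c b) ⊔ ε) ⊔ ε := by
    simp [relCompE, hmul]
  constructor
  · left
    rw [hE]
    refine le_trans ?_ le_sup_left
    exact iSup_mono fun c => le_sup_left
  · have hle : relCompE ε r s a b ≤ relComp r s a b ⊔ ε := by
      rw [hE]
      simp only [relComp]
      apply sup_le _ le_sup_right
      exact iSup_le fun c => sup_le (le_sup_of_le_left (le_iSup (fun c => r a c * s c b) c)) le_sup_right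
    rcases le_total ε (relComp r s a b) with h | h
    · left; exact hle.trans (sup_le le_rfl h)
    · right; exact hle.trans (sup_le h le_rfl)
end

section
/- Let f, g be fuzzy subsets of X and r a fuzzy relation on X over a linear complete residuated lattice, and ε ∈ L. If f =_ε g pointwise, then f ∘_ε r =_ε g ∘_ε r and r ∘_ε f =_ε r ∘_ε g. -/
variable {L : Type*} [ResiduatedLattice L]

/-- `(f ∘_ε r)(a) = ⋁_ε { f(b) ⊗_ε r(b,a) : b ∈ X }`. -/
noncomputable def vecRelCompE {X : Type*} (ε : L) (f : X → L) (r : X → X → L) : X → L :=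
  fun a => (⨆ b, mulE ε (f b) (r b a)) ⊔ ε

/-- `(r ∘_ε f)(a) = ⋁_ε { r(a,b) ⊗_ε f(b) : b ∈ X }`. -/
noncomputable def relVecCompE {X : Type*} (ε : L) (r : X → X → L) (f : X → L) : X → L :=
  fun a => (⨆ b, mulE ε (r a b) (f b)) ⊔ ε

lemma my_mul_le_mul_left {x y z : L} (h : x ≤ y) : x * z ≤ y * z := by
  have := (ResiduatedLattice.adjunction y z (y * z)).mp le_rfl
  exact (ResiduatedLattice.adjunction x z (y * z)).mpr (le_trans h this)

lemma my_mul_le_left (x y : L) : x * y ≤ x := by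
  have : y ≤ 1 := le_top.trans (le_of_eq (@ResiduatedLattice.one_eq_top L _).symm)
  calc x * y = y * x := mul_comm _ _
    _ ≤ 1 * x := my_mul_le_mul_left this
    _ = x := one_mul x

lemma eps_le_mulE (ε x y : L) : ε ≤ mulE ε x y := by
  by_cases hc : ε < x * y <;> simp [mulE, hc, le_of_lt]

lemma mulE_mono_left {ε x y : L} (h : eqE ε x y) (z : L) :
    mulE ε x z ≤ mulE ε y z := by
  unfold mulE
  split
  · rename_i hx
    have hxy : x ≤ y := by
      rcases h.1 with h1 | h1
      · exact h1
      · exfalso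
        have : x * z ≤ ε := le_trans (my_mul_le_left x z) h1
        exact absurd (lt_of_lt_of_le hx this) (lt_irrefl ε)
    have hle : x * z ≤ y * z := my_mul_le_mul_left hxy
    have hy : ε < y * z := lt_of_lt_of_le hx hle
    rw [if_pos hy]; exact hle
  · exact eps_le_mulE ε y z

lemma mulE_mono_right {ε x y : L} (h : eqE ε x y) (z : L) :
    mulE ε z x ≤ mulE ε z y := by
  simpa [mulE, mul_comm] using mulE_mono_left h z

lemma eqE_symm {ε x y : L} (h : eqE ε x y) : eqE ε y x := ⟨h.2, h.1⟩

theorem stmt_8 {X : Type*} (ε : L) (f g : X → L) (r : X → X → L)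
    (h : ∀ a, eqE ε (f a) (g a)) :
    (∀ a, eqE ε (vecRelCompE ε f r a) (vecRelCompE ε g r a)) ∧
    (∀ a, eqE ε (relVecCompE ε r f a) (relVecCompE ε r g a)) := by
  constructor
  · intro a
    refine ⟨Or.inl ?_, Or.inl ?_⟩
    · exact sup_le_sup (iSup_mono fun b => mulE_mono_left (h b) (r b a)) le_rfl
    · exact sup_le_sup (iSup_mono fun b => mulE_mono_left (eqE_symm (h b)) (r b a)) le_rfl
  · intro a
    refine ⟨Or.inl ?_, Or.inl ?_⟩
    · exact sup_le_sup (iSup_mono fun b => mulE_mono_right (h b) (r a b)) le_rfl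
    · exact sup_le_sup (iSup_mono fun b => mulE_mono_right (eqE_symm (h b)) (r a b)) le_rfl
end

section
/- Let f, g be fuzzy subsets of X and r a fuzzy relation on X over a linear complete residuated lattice, ε ∈ L. Then the following are equivalent: (i) r ∘ f ≤_ε g; (ii) r ∘_ε f ≤_ε g; (iii) r ≤_ε g /_ε f, where (g /_ε f)(a,b) := (f(b) →_ε g(a)). -/
variable {L : Type*} [ResiduatedLattice L]

/-- `(r ∘ f)(a) = sup_b r(a,b) ⊗ f(b)`. -/
noncomputable def relVecComp {X : Type*} (r : X → X → L) (f : X → L) : X → L :=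
  fun a => ⨆ b, r a b * f b

/-- `(g /_ε f)(a,b) := (f(b) →_ε g(a))`. -/
def divE {X : Type*} (ε : L) (g f : X → L) : X → X → L :=
  fun a b => resE ε (f b) (g a)


lemma myMulMono {a b c d : L} (h1 : a ≤ b) (h2 : c ≤ d) : a * c ≤ b * d := by
  have hbd : a * d ≤ b * d :=
    (ResiduatedLattice.adjunction a d (b*d)).mpr
      (le_trans h1 ((ResiduatedLattice.adjunction b d (b*d)).mp le_rfl))
  have hcd : c * a ≤ d * a :=
    (ResiduatedLattice.adjunction c a (d*a)).mpr
      (le_trans h2 ((ResiduatedLattice.adjunction d a (d*a)).mp le_rfl))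
  calc a * c = c * a := mul_comm a c
    _ ≤ d * a := hcd
    _ = a * d := mul_comm d a
    _ ≤ b * d := hbd

lemma leE_iff (ε x y : L) : leE ε x y ↔ x ≤ y ⊔ ε := by
  unfold leE
  exact (le_sup_iff).symm

lemma mulE_eq (ε x y : L) : mulE ε x y = x * y ⊔ ε := by
  unfold mulE
  by_cases h : ε < x * y
  · simp [h, sup_eq_left.mpr h.le]
  · simp [h, sup_eq_right.mpr (le_of_not_gt h)]

lemma key (ε x u v : L) :
    x * u ≤ v ⊔ ε ↔ x ≤ ResiduatedLattice.res (u ⊔ ε) (v ⊔ ε) ⊔ ε := by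
  constructor
  · intro h
    refine le_sup_of_le_left ?_
    rw [← ResiduatedLattice.adjunction]
    rcases le_total u ε with hu | hu
    · rw [sup_eq_right.mpr hu]
      calc x * ε ≤ 1 * ε := myMulMono (by rw [ResiduatedLattice.one_eq_top]; exact le_top) le_rfl
        _ = ε := one_mul ε
        _ ≤ v ⊔ ε := le_sup_right
    · rw [sup_eq_left.mpr hu]; exact h
  · intro h
    rcases le_sup_iff.mp h with h | h
    · have := (ResiduatedLattice.adjunction x (u ⊔ ε) (v ⊔ ε)).mpr h
      exact le_trans (myMulMono le_rfl le_sup_left) this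
    · calc x * u ≤ ε * 1 := myMulMono h (by rw [ResiduatedLattice.one_eq_top]; exact le_top)
        _ = ε := mul_one ε
        _ ≤ v ⊔ ε := le_sup_right

lemma relVecCompE_eq {X : Type*} (ε : L) (r : X → X → L) (f : X → L) (a : X) :
    relVecCompE ε r f a = relVecComp r f a ⊔ ε := by
  unfold relVecCompE relVecComp
  simp only [mulE_eq]
  apply le_antisymm
  · refine sup_le (iSup_le fun b => sup_le (le_sup_of_le_left (le_iSup (fun b => r a b * f b) b)) le_sup_right) le_sup_right
  · exact sup_le (le_sup_of_le_left (iSup_mono fun b => le_sup_left)) le_sup_right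

theorem stmt_9 {X : Type*} (ε : L) (f g : X → L) (r : X → X → L) :
    ((∀ a, leE ε (relVecComp r f a) (g a)) ↔
      (∀ a, leE ε (relVecCompE ε r f a) (g a))) ∧
    ((∀ a, leE ε (relVecCompE ε r f a) (g a)) ↔
      (∀ a b, leE ε (r a b) (divE ε g f a b))) := by
  have h2 : (∀ a, leE ε (relVecCompE ε r f a) (g a)) ↔
      (∀ a b, leE ε (r a b) (divE ε g f a b)) := by
    constructor
    · intro h a b
      have := (leE_iff _ _ _).mp (h a)
      rw [relVecCompE_eq] at this
      have hb : r a b * f b ≤ g a ⊔ ε :=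
        le_trans (le_trans (le_iSup (fun b => r a b * f b) b) le_sup_left) this
      rw [leE_iff]
      exact (key ε (r a b) (f b) (g a)).mp hb
    · intro h a
      rw [leE_iff, relVecCompE_eq]
      refine sup_le (iSup_le fun b => ?_) le_sup_right
      exact (key ε (r a b) (f b) (g a)).mpr ((leE_iff _ _ _).mp (h a b))
  refine ⟨?_, h2⟩
  constructor
  · intro h a
    rw [leE_iff, relVecCompE_eq]
    exact sup_le ((leE_iff _ _ _).mp (h a)) le_sup_right
  · intro h a
    rw [leE_iff]
    have := (leE_iff _ _ _).mp (h a)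
    rw [relVecCompE_eq] at this
    exact le_trans le_sup_left this
end

section
/- If r is a reflexive and ε-transitive fuzzy relation on X over a linear complete residuated lattice, then its ε-truncation r_ε is an ε-FPO on X, i.e., r_ε is reflexive, ε-transitive, and (r_ε)_ε = r_ε. -/
variable {L : Type*} [ResiduatedLattice L]

/-- The `ε`-truncation of a fuzzy relation. -/
def truncRel {X : Type*} (ε : L) (r : X → X → L) : X → X → L :=
  fun a b => if ε < r a b then r a b else ε

/-- A fuzzy `ε`-pre-order (`ε`-FPO) on `X`: a fuzzy relation that is reflexive,
`ε`-transitive, and equal to its own `ε`-truncation. -/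
def IsEFPO {X : Type*} (ε : L) (r : X → X → L) : Prop :=
  (∀ x, r x x = 1) ∧
  (∀ a b, leE ε (relCompE ε r r a b) (r a b)) ∧
  truncRel ε r = r


lemma myle_one (x : L) : x ≤ 1 := ResiduatedLattice.one_eq_top (L := L) ▸ le_top

lemma mymul_mono {x x' y y' : L} (hx : x ≤ x') (hy : y ≤ y') : x * y ≤ x' * y' := by
  have h1 : x * y ≤ x' * y := by
    rw [ResiduatedLattice.adjunction]
    exact hx.trans ((ResiduatedLattice.adjunction x' y (x' * y)).mp le_rfl)
  have h2 : x' * y ≤ x' * y' := by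
    rw [mul_comm x' y, mul_comm x' y', ResiduatedLattice.adjunction]
    exact hy.trans ((ResiduatedLattice.adjunction y' x' (y' * x')).mp le_rfl)
  exact h1.trans h2

lemma mymulE_eq {ε x y : L} (h : x * y ≤ ε) : mulE ε x y = ε :=
  if_neg (not_lt.mpr h)

lemma mulE_trunc (ε u v : L) :
    mulE ε (if ε < u then u else ε) (if ε < v then v else ε) = mulE ε u v := by
  have hee : ε * ε ≤ ε := (mymul_mono le_rfl (myle_one ε)).trans (le_of_eq (mul_one ε))
  split_ifs with hu hv hv
  · rfl
  · have h1 : u * ε ≤ ε := (mymul_mono (myle_one u) le_rfl).trans (le_of_eq (one_mul ε))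
    have h2 : u * v ≤ ε := (mymul_mono le_rfl (not_lt.mp hv)).trans h1
    rw [mymulE_eq h1, mymulE_eq h2]
  · have h1 : ε * v ≤ ε := (mymul_mono le_rfl (myle_one v)).trans (le_of_eq (mul_one ε))
    have h2 : u * v ≤ ε := (mymul_mono (not_lt.mp hu) le_rfl).trans h1
    rw [mymulE_eq h1, mymulE_eq h2]
  · have h2 : u * v ≤ ε := (mymul_mono (not_lt.mp hu) (myle_one v)).trans (le_of_eq (mul_one ε))
    rw [mymulE_eq hee, mymulE_eq h2]

theorem stmt_11 {X : Type*} (ε : L) (r : X → X → L)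
    (hrefl : ∀ x, r x x = 1)
    (htrans : ∀ a b, leE ε (relCompE ε r r a b) (r a b)) :
    IsEFPO ε (truncRel ε r) := by
  refine ⟨?_, ?_, ?_⟩
  · intro x
    unfold truncRel
    rw [hrefl x]
    split_ifs with h
    · rfl
    · exact le_antisymm (myle_one ε) (not_lt.mp h)
  · intro a b
    have hcomp : relCompE ε (truncRel ε r) (truncRel ε r) a b = relCompE ε r r a b := by
      unfold relCompE truncRel
      congr 1
      exact iSup_congr fun c => mulE_trunc ε (r a c) (r c b)
    rw [hcomp]
    rcases htrans a b with h | h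
    · unfold truncRel
      split_ifs with h2
      · exact Or.inl h
      · exact Or.inr (h.trans (not_lt.mp h2))
    · exact Or.inr h
  · funext a b
    by_cases h : ε < r a b
    · simp [truncRel, h]
    · simp [truncRel, h]
end

section
/- If r is an ε'-FPO on X and ε' < ε, then the ε-truncation r_ε is an ε-FPO on X. -/
variable {L : Type*} [ResiduatedLattice L]

lemma my_trunc_ge {X : Type*} (ε : L) (r : X → X → L) (a b : X) :
    ε ≤ truncRel ε r a b := by
  unfold truncRel
  split
  · exact le_of_lt ‹_›
  · exact le_rfl

lemma my_trunc_gt {X : Type*} {ε : L} {r : X → X → L} {a b : X}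
    (h : ε < truncRel ε r a b) : truncRel ε r a b = r a b ∧ ε < r a b := by
  by_cases hc : ε < r a b
  · exact ⟨by simp [truncRel, hc], hc⟩
  · exact absurd h (by simp [truncRel, hc])

theorem stmt_13 {X : Type*} (ε ε' : L) (r : X → X → L)
    (h : IsEFPO ε' r) (hlt : ε' < ε) :
    IsEFPO ε (truncRel ε r) := by
  obtain ⟨hrefl, htrans, -⟩ := h
  set t := truncRel ε r with ht
  refine ⟨?_, ?_, ?_⟩
  · intro x
    show (if ε < r x x then r x x else ε) = 1
    split
    · exact hrefl x
    · have h1 : (1:L) ≤ ε := (hrefl x) ▸ not_lt.1 ‹_›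
      exact le_antisymm (by rw [ResiduatedLattice.one_eq_top]; exact le_top) h1
  · intro a b
    left
    refine sup_le (iSup_le fun c => ?_) (my_trunc_ge ε r a b)
    show (if ε < t a c * t c b then t a c * t c b else ε) ≤ t a b
    split
    · rename_i h1
      have hac := my_trunc_gt (lt_of_lt_of_le h1 (my_mul_le_left _ _))
      have hcb := my_trunc_gt (lt_of_lt_of_le h1 (by rw [mul_comm]; exact my_mul_le_left _ _))
      rw [ht] at h1 ⊢
      rw [hac.1, hcb.1] at h1 ⊢
      have hprod : r a c * r c b ≤ relCompE ε' r r a b := by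
        have : mulE ε' (r a c) (r c b) = r a c * r c b := by
          unfold mulE; rw [if_pos (lt_trans hlt h1)]
        calc r a c * r c b = mulE ε' (r a c) (r c b) := this.symm
          _ ≤ ⨆ c, mulE ε' (r a c) (r c b) := le_iSup (fun c => mulE ε' (r a c) (r c b)) c
          _ ≤ relCompE ε' r r a b := le_sup_left
      rcases htrans a b with hle | hle
      · have hr : ε < r a b := lt_of_lt_of_le h1 (le_trans hprod hle)
        show r a c * r c b ≤ t a b
        have : truncRel ε r a b = r a b := by
          show (if ε < r a b then r a b else ε) = r a b
          rw [if_pos hr]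
        show r a c * r c b ≤ truncRel ε r a b
        rw [this]; exact le_trans hprod hle
      · exact absurd (lt_of_lt_of_le (lt_trans hlt h1) (le_trans hprod hle)) (lt_irrefl ε')
    · exact my_trunc_ge ε r a b
  · funext a b
    show (if ε < t a b then t a b else ε) = t a b
    split
    · rfl
    · exact le_antisymm (my_trunc_ge ε r a b) (not_lt.1 ‹_›)
end

section
/- Let Z be an ε-FPO on a set Q over a linear complete residuated lattice. For any p, q ∈ Q, the aftersets Z_p and Z_q are equal (Z(p,·) = Z(q,·)) if and only if the foresets Z^p and Z^q are equal (Z(·,p) = Z(·,q)). -/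
variable {L : Type*} [ResiduatedLattice L]

lemma eps_le_of_EFPO {Q : Type*} {ε : L} {Z : Q → Q → L} (h : IsEFPO ε Z)
    (a b : Q) : ε ≤ Z a b := by
  have := congrFun (congrFun h.2.2 a) b
  simp only [truncRel] at this
  by_cases hlt : ε < Z a b
  · exact le_of_lt hlt
  · simp [hlt] at this; exact le_of_eq this

lemma mulE_one_right {Q : Type*} {ε : L} {Z : Q → Q → L} (h : IsEFPO ε Z)
    (a b : Q) : mulE ε (Z a b) 1 = Z a b := by
  have hε := eps_le_of_EFPO h a b
  simp only [mulE, mul_one]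
  by_cases hlt : ε < Z a b
  · simp [hlt]
  · simp [hlt]; exact le_antisymm hε (not_lt.mp hlt)

lemma mulE_one_left {Q : Type*} {ε : L} {Z : Q → Q → L} (h : IsEFPO ε Z)
    (a b : Q) : mulE ε 1 (Z a b) = Z a b := by
  have := mulE_one_right h a b
  simpa [mulE, mul_comm] using this

lemma foreset_le {Q : Type*} {ε : L} {Z : Q → Q → L} (h : IsEFPO ε Z)
    {a b : Q} (h1 : Z a b = 1) (s : Q) : Z s a ≤ Z s b := by
  have hcomp := h.2.1 s b
  have hle : Z s a ≤ relCompE ε Z Z s b := by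
    have h2 : mulE ε (Z s a) (Z a b) = Z s a := by rw [h1]; exact mulE_one_right h s a
    calc Z s a = mulE ε (Z s a) (Z a b) := h2.symm
      _ ≤ ⨆ c, mulE ε (Z s c) (Z c b) := le_iSup (fun c => mulE ε (Z s c) (Z c b)) a
      _ ≤ relCompE ε Z Z s b := le_sup_left
  rcases hcomp with h3 | h3
  · exact hle.trans h3
  · exact (hle.trans h3).trans (eps_le_of_EFPO h s b)

lemma afterset_le {Q : Type*} {ε : L} {Z : Q → Q → L} (h : IsEFPO ε Z)
    {a b : Q} (h1 : Z a b = 1) (s : Q) : Z b s ≤ Z a s := by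
  have hcomp := h.2.1 a s
  have hle : Z b s ≤ relCompE ε Z Z a s := by
    have h2 : mulE ε (Z a b) (Z b s) = Z b s := by rw [h1]; exact mulE_one_left h b s
    calc Z b s = mulE ε (Z a b) (Z b s) := h2.symm
      _ ≤ ⨆ c, mulE ε (Z a c) (Z c s) := le_iSup (fun c => mulE ε (Z a c) (Z c s)) b
      _ ≤ relCompE ε Z Z a s := le_sup_left
  rcases hcomp with h3 | h3
  · exact hle.trans h3
  · exact (hle.trans h3).trans (eps_le_of_EFPO h a s)

theorem stmt_14 {Q : Type*} (ε : L) (Z : Q → Q → L) (h : IsEFPO ε Z) (p q : Q) :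
    (∀ s, Z p s = Z q s) ↔ (∀ s, Z s p = Z s q) := by
  constructor
  · intro ha
    have hpq : Z p q = 1 := by rw [ha q]; exact h.1 q
    have hqp : Z q p = 1 := by rw [← ha p]; exact h.1 p
    exact fun s => le_antisymm (foreset_le h hpq s) (foreset_le h hqp s)
  · intro hf
    have hqp : Z q p = 1 := by rw [hf q]; exact h.1 q
    have hpq : Z p q = 1 := by rw [← hf p]; exact h.1 p
    exact fun s => le_antisymm (afterset_le h hqp s) (afterset_le h hpq s)
end

section
/- Let Z be a reflexive fuzzy relation on the state set Q of a fuzzy automaton A over a linear complete residuated lattice. If Z is a right ε-invariance on A (i.e., Z ∘ F_w =_ε F_w for all w ∈ Σ*), then Z ∘ Z is also a right ε-invariance on A. -/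
variable {L : Type*} [ResiduatedLattice L]

/-- A fuzzy automaton over `L` with state set `Q` and alphabet `S`. -/
structure FuzzyAutomaton (L : Type*) (Q S : Type*) where
  I : Q → L
  δ : Q → S → Q → L
  F : Q → L

open scoped Classical in
/-- The fuzzy relation `δ_w` of a word `w`. -/
noncomputable def deltaWord {Q S : Type*} (M : FuzzyAutomaton L Q S) :
    List S → Q → Q → L
  | [] => fun p q => if p = q then (1 : L) else ⊥
  | σ :: u => fun p q => ⨆ r, M.δ p σ r * deltaWord M u r q

/-- `F_w := δ_w ∘ F`. -/
noncomputable def Fword {Q S : Type*} (M : FuzzyAutomaton L Q S) (w : List S) : Q → L :=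
  fun q => ⨆ p, deltaWord M w q p * M.F p

/-- `Z` is a right `ε`-invariance on `M`: `Z` is reflexive and `Z ∘ F_w =_ε F_w`
for every word `w`. -/
noncomputable def RightEInv {Q S : Type*} (M : FuzzyAutomaton L Q S) (ε : L)
    (Z : Q → Q → L) : Prop :=
  (∀ q, Z q q = 1) ∧
  ∀ w : List S, ∀ q, eqE ε (⨆ p, Z q p * Fword M w p) (Fword M w q)


lemma my_mul_le_mul_left_s16 {a b : L} (c : L) (h : a ≤ b) : a * c ≤ b * c := by
  rw [ResiduatedLattice.adjunction]
  exact h.trans ((ResiduatedLattice.adjunction b c (b * c)).mp le_rfl)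

lemma my_mul_le_right (a b : L) : a * b ≤ b := by
  have h1 : a * b ≤ 1 * b :=
    my_mul_le_mul_left_s16 b (by rw [ResiduatedLattice.one_eq_top]; exact le_top)
  rwa [one_mul] at h1

lemma my_iSup_mul {ι : Sort*} (f : ι → L) (a : L) : (⨆ i, f i) * a = ⨆ i, f i * a := by
  apply le_antisymm
  · rw [ResiduatedLattice.adjunction]
    exact iSup_le fun i =>
      (ResiduatedLattice.adjunction _ _ _).mp (le_iSup (fun i => f i * a) i)
  · exact iSup_le fun i => my_mul_le_mul_left_s16 a (le_iSup f i)

theorem stmt_16 {Q S : Type*} (M : FuzzyAutomaton L Q S) (ε : L) (Z : Q → Q → L)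
    (h : RightEInv M ε Z) :
    RightEInv M ε (relComp Z Z) := by
  obtain ⟨hrefl, hw⟩ := h
  constructor
  · intro q
    apply le_antisymm
    · rw [ResiduatedLattice.one_eq_top]; exact le_top
    · have h1 : Z q q * Z q q ≤ relComp Z Z q q := le_iSup (fun s => Z q s * Z s q) q
      rwa [hrefl, one_mul] at h1
  · intro w q
    have hFleG : ∀ s, Fword M w s ≤ ⨆ p, Z s p * Fword M w p := fun s => by
      have h1 := le_iSup (fun p => Z s p * Fword M w p) s
      rwa [hrefl, one_mul] at h1
    have hGleT : ∀ p, Z q p * Fword M w p ≤ ⨆ p, relComp Z Z q p * Fword M w p := fun p => by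
      have h1 : Z q q * Z q p ≤ relComp Z Z q p := le_iSup (fun s => Z q s * Z s p) q
      rw [hrefl, one_mul] at h1
      exact (my_mul_le_mul_left_s16 (Fword M w p) h1).trans
        (le_iSup (fun p => relComp Z Z q p * Fword M w p) p)
    constructor
    · have hT : (⨆ p, relComp Z Z q p * Fword M w p) ≤ Fword M w q ⊔ ε := by
        apply iSup_le; intro p
        show (⨆ s, Z q s * Z s p) * Fword M w p ≤ _
        rw [my_iSup_mul]
        apply iSup_le; intro s
        rw [mul_assoc]
        have h2 : Z q s * (Z s p * Fword M w p) ≤ Z q s * (⨆ p, Z s p * Fword M w p) := by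
          rw [mul_comm (Z q s), mul_comm (Z q s)]
          exact my_mul_le_mul_left_s16 _ (le_iSup (fun p => Z s p * Fword M w p) p)
        have hs := (hw w s).1
        unfold leE at hs
        rcases hs with hs | hs
        · have h3 : Z q s * (⨆ p, Z s p * Fword M w p) ≤ ⨆ p, Z q p * Fword M w p := by
            calc Z q s * (⨆ p, Z s p * Fword M w p) ≤ Z q s * Fword M w s := by
                  rw [mul_comm (Z q s), mul_comm (Z q s)]
                  exact my_mul_le_mul_left_s16 _ hs
              _ ≤ ⨆ p, Z q p * Fword M w p := le_iSup (fun p => Z q p * Fword M w p) s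
          have hq := (hw w q).1
          unfold leE at hq
          rcases hq with hq | hq
          · exact le_sup_of_le_left ((h2.trans h3).trans hq)
          · exact le_sup_of_le_right ((h2.trans h3).trans hq)
        · exact le_sup_of_le_right
            (h2.trans ((my_mul_le_right _ _).trans hs))
      rcases le_total ε (Fword M w q) with hcase | hcase
      · left; rwa [sup_eq_left.mpr hcase] at hT
      · right; rwa [sup_eq_right.mpr hcase] at hT
    · left
      exact (hFleG q).trans (iSup_le hGleT)
end
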